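/- Let η ∈ L²_μ(Ω;V), and define Πη(τ) = −∫₀^ℓ μ'(τ+s) η(s) ds for τ ∈ Ω. Then Πη ∈ L²_ν(Ω;V) and ‖Πη‖_{L²_ν(Ω;V)} ≤ ‖η‖_{L²_μ(Ω;V)}, i.e. ∫₀^ℓ (1/μ(τ)) ‖∫₀^ℓ μ'(τ+s) η(s) ds‖²_V dτ ≤ ∫₀^ℓ μ(s) ‖η(s)‖²_V ds. -/

import Mathlib

open MeasureTheory Set Filter
open scoped ENNReal

private lemma ioi_eq_iUnion_Icc (σ : ℝ) :
    Ioi σ = ⋃ n : ℕ, Icc (σ + ((n : ℝ) + 1)⁻¹) (σ + n + 1) := by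
  ext x
  simp only [mem_Ioi, mem_iUnion, mem_Icc]
  constructor
  · intro hx
    obtain ⟨n₀, hn₀⟩ := exists_nat_one_div_lt (sub_pos.2 hx)
    obtain ⟨n₁, hn₁⟩ := exists_nat_ge (x - σ)
    refine ⟨max n₀ n₁, ?_, ?_⟩
    · have h1 : ((n₀ : ℝ)) ≤ ((max n₀ n₁ : ℕ) : ℝ) := by exact_mod_cast le_max_left n₀ n₁
      have h2 : (((max n₀ n₁ : ℕ) : ℝ) + 1)⁻¹ ≤ ((n₀ : ℝ) + 1)⁻¹ := by gcongr
      rw [one_div] at hn₀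
      linarith
    · have : (n₁ : ℝ) ≤ ((max n₀ n₁ : ℕ) : ℝ) := by exact_mod_cast le_max_right n₀ n₁
      linarith
  · rintro ⟨n, h1, h2⟩
    have : (0:ℝ) < ((n:ℝ)+1)⁻¹ := by positivity
    linarith

private lemma icc_mono_aux (σ : ℝ) :
    Monotone (fun n : ℕ => Icc (σ + ((n : ℝ) + 1)⁻¹) (σ + n + 1)) := by
  intro n m hnm
  have : ((n:ℝ)) ≤ (m:ℝ) := by exact_mod_cast hnm
  apply Icc_subset_Icc
  · gcongr
  · linarith

/-- Lemma `lemmaSH`. Let `μ` be extended by `0` outside `Ω`, with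
a.e. derivative `μ' ≤ 0` (FTC form), and let `η ∈ L²_μ(Ω;V)`. Then
`Πη(τ) = −∫₀^ℓ μ'(τ+s) η(s) ds` is well defined for a.e. `τ ∈ Ω`, belongs to
`L²_ν(Ω;V)` with `ν = 1/μ`, and `‖Πη‖_{L²_ν} ≤ ‖η‖_{L²_μ}`, i.e.
`∫₀^ℓ (1/μ(τ)) ‖∫₀^ℓ μ'(τ+s) η(s) ds‖² dτ ≤ ∫₀^ℓ μ(s) ‖η(s)‖² ds`. -/
theorem stmt11
    {V : Type*} [NormedAddCommGroup V] [InnerProductSpace ℝ V] [CompleteSpace V]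
    (ℓ : EReal) (hℓ : 0 < ℓ)
    (Ω : Set ℝ) (hΩ : Ω = {s : ℝ | 0 < s ∧ (s : EReal) < ℓ})
    (μ μ' : ℝ → ℝ)
    (hμpos : ∀ s ∈ Ω, 0 < μ s)
    (hμzero : ∀ s : ℝ, 0 < s → s ∉ Ω → μ s = 0)
    (hμmono : AntitoneOn μ (Ioi 0))
    (hμint : IntegrableOn μ (Ioi 0))
    (hμ'loc : ∀ a b : ℝ, 0 < a → IntegrableOn μ' (Icc a b))
    (hμ'le : ∀ᵐ s ∂(volume.restrict (Ioi 0)), μ' s ≤ 0)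
    (hFTC : ∀ a b : ℝ, 0 < a → a ≤ b → μ b = μ a + ∫ x in a..b, μ' x)
    (η : ℝ → V)
    (hηmeas : AEStronglyMeasurable η (volume.restrict Ω))
    (hηL2 : IntegrableOn (fun s => μ s * ‖η s‖ ^ 2) Ω) :
    (∀ᵐ τ ∂(volume.restrict Ω), IntegrableOn (fun s => μ' (τ + s) • η s) Ω) ∧
      IntegrableOn (fun τ => (μ τ)⁻¹ * ‖∫ s in Ω, μ' (τ + s) • η s‖ ^ 2) Ω ∧
      (∫ τ in Ω, (μ τ)⁻¹ * ‖∫ s in Ω, μ' (τ + s) • η s‖ ^ 2) ≤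
        ∫ s in Ω, μ s * ‖η s‖ ^ 2 := by
  have hΩsub : Ω ⊆ Ioi 0 := by rw [hΩ]; intro x hx; exact hx.1
  have hΩmeas : MeasurableSet Ω := by
    rw [hΩ]
    have : {s : ℝ | 0 < s ∧ (s : EReal) < ℓ}
        = Ioi 0 ∩ (fun s : ℝ => (s : EReal)) ⁻¹' (Iio ℓ) := rfl
    rw [this]
    exact measurableSet_Ioi.inter (continuous_coe_real_ereal.measurable measurableSet_Iio)
  have hμnn : ∀ x : ℝ, 0 < x → 0 ≤ μ x := by
    intro x hx
    by_cases hxΩ : x ∈ Ω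
    · exact (hμpos x hxΩ).le
    · exact (hμzero x hx hxΩ).symm.le
  have hμ'meas : AEStronglyMeasurable μ' (volume.restrict (Ioi 0)) := by
    rw [show Ioi (0:ℝ) = ⋃ n : ℕ, Icc ((0:ℝ) + ((n:ℝ)+1)⁻¹) (0 + n + 1) from ioi_eq_iUnion_Icc 0,
      aestronglyMeasurable_iUnion_iff]
    intro n
    exact (hμ'loc _ _ (by positivity)).aestronglyMeasurable
  set g : ℝ → ℝ := hμ'meas.mk μ' with hgdef
  have hgsm : StronglyMeasurable g := hμ'meas.stronglyMeasurable_mk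
  have hgmeas : Measurable g := hgsm.measurable
  have hgae : μ' =ᵐ[volume.restrict (Ioi 0)] g := hμ'meas.ae_eq_mk
  have hgle : ∀ᵐ x ∂(volume.restrict (Ioi 0)), g x ≤ 0 := by
    filter_upwards [hμ'le, hgae] with x h1 h2
    exact h2 ▸ h1
  set η' : ℝ → V := hηmeas.mk η with hη'def
  have hη'sm : StronglyMeasurable η' := hηmeas.stronglyMeasurable_mk
  have hηae : η =ᵐ[volume.restrict Ω] η' := hηmeas.ae_eq_mk
  set W : ℝ → ℝ≥0∞ := fun x => ENNReal.ofReal (-g x) with hWdef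
  have hWmeas : Measurable W := hgmeas.neg.ennreal_ofReal
  -- Icc bound
  have hIcc : ∀ σ a b : ℝ, 0 < σ → σ ≤ a → ∫⁻ x in Icc a b, W x ≤ ENNReal.ofReal (μ σ) := by
    intro σ a b hσ hσa
    have ha : 0 < a := lt_of_lt_of_le hσ hσa
    rcases le_or_gt a b with hab | hab
    · have hInt : IntegrableOn μ' (Icc a b) volume := hμ'loc a b ha
      have hsub : Icc a b ⊆ Ioi 0 := fun x hx => lt_of_lt_of_le ha hx.1
      have hgae' : μ' =ᵐ[volume.restrict (Icc a b)] g :=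
        ae_restrict_of_ae_restrict_of_subset hsub hgae
      have hgle' : ∀ᵐ x ∂(volume.restrict (Icc a b)), g x ≤ 0 :=
        ae_restrict_of_ae_restrict_of_subset hsub hgle
      have h1 : ∫⁻ x in Icc a b, W x = ∫⁻ x in Icc a b, ENNReal.ofReal (-μ' x) := by
        apply lintegral_congr_ae
        filter_upwards [hgae'] with x hx
        rw [hWdef]; simp only; rw [hx]
      have hIntg : Integrable (fun x => -μ' x) (volume.restrict (Icc a b)) := hInt.neg
      have hnn : 0 ≤ᵐ[volume.restrict (Icc a b)] fun x => -μ' x := by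
        filter_upwards [hgae', hgle'] with x hx1 hx2
        simp only [Pi.zero_apply, neg_nonneg]
        exact hx1 ▸ hx2
      have h2 : ∫⁻ x in Icc a b, ENNReal.ofReal (-μ' x)
          = ENNReal.ofReal (∫ x in Icc a b, -μ' x) :=
        (ofReal_integral_eq_lintegral_ofReal hIntg hnn).symm
      have h3 : ∫ x in Icc a b, -μ' x = μ a - μ b := by
        have hf := hFTC a b ha hab
        have hIoc : ∫ x in Icc a b, μ' x = ∫ x in a..b, μ' x := by
          rw [intervalIntegral.integral_of_le hab, integral_Icc_eq_integral_Ioc]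
        rw [integral_neg, hIoc]
        linarith
      rw [h1, h2, h3]
      apply ENNReal.ofReal_le_ofReal
      have hμa : μ a ≤ μ σ := hμmono (mem_Ioi.2 hσ) (mem_Ioi.2 ha) hσa
      have hb : 0 < b := lt_of_lt_of_le ha hab
      have := hμnn b hb
      linarith
    · rw [Icc_eq_empty (not_le.2 hab)]
      simp
  -- bound on Ioi σ
  have hKeyIoi : ∀ σ : ℝ, 0 < σ → ∫⁻ x in Ioi σ, W x ≤ ENNReal.ofReal (μ σ) := by
    intro σ hσ
    rw [ioi_eq_iUnion_Icc σ, setLIntegral_iUnion_of_directed _ ((icc_mono_aux σ).directed_le)]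
    exact iSup_le fun n => hIcc σ _ _ hσ (le_add_of_nonneg_right (by positivity))
  -- shifted bound
  have hKey : ∀ σ : ℝ, 0 < σ → ∫⁻ t in Ω, W (σ + t) ≤ ENNReal.ofReal (μ σ) := by
    intro σ hσ
    have h1 : ∫⁻ t in Ω, W (σ + t) ≤ ∫⁻ t in Ioi 0, W (σ + t) := lintegral_mono_set hΩsub
    have hpre : (fun t : ℝ => σ + t) ⁻¹' (Ioi σ) = Ioi 0 := by
      ext t; simp [mem_Ioi]
    have h2 : ∫⁻ t in Ioi 0, W (σ + t) = ∫⁻ x in Ioi σ, W x := by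
      rw [← hpre]
      exact (measurePreserving_add_left volume σ).setLIntegral_comp_preimage_emb
        (measurableEmbedding_addLeft σ) W (Ioi σ)
    calc ∫⁻ t in Ω, W (σ + t) ≤ ∫⁻ t in Ioi 0, W (σ + t) := h1
      _ = ∫⁻ x in Ioi σ, W x := h2
      _ ≤ ENNReal.ofReal (μ σ) := hKeyIoi σ hσ
  -- a.e. facts after shifting
  have hae_s : ∀ τ : ℝ, 0 < τ →
      ∀ᵐ s ∂(volume.restrict Ω), μ' (τ + s) = g (τ + s) ∧ g (τ + s) ≤ 0 := by
    intro τ hτ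
    have h1 : ∀ᵐ x ∂(volume.restrict (Ioi 0)), μ' x = g x ∧ g x ≤ 0 := by
      filter_upwards [hgae, hgle] with x h1 h2 using ⟨h1, h2⟩
    have h2 : ∀ᵐ x : ℝ, x ∈ Ioi 0 → (μ' x = g x ∧ g x ≤ 0) :=
      (ae_restrict_iff' measurableSet_Ioi).1 h1
    have h3 : ∀ᵐ s : ℝ, τ + s ∈ Ioi 0 → (μ' (τ + s) = g (τ + s) ∧ g (τ + s) ≤ 0) :=
      (measurePreserving_add_left volume τ).quasiMeasurePreserving.ae h2
    refine (ae_restrict_iff' hΩmeas).2 ?_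
    filter_upwards [h3] with s h hs
    exact h (mem_Ioi.2 (by have := hΩsub hs; simp only [mem_Ioi] at this; linarith))
  -- the quadratic kernel integral
  set B : ℝ → ℝ≥0∞ := fun τ => ∫⁻ s in Ω, W (τ + s) * ENNReal.ofReal (‖η' s‖ ^ 2) with hBdef
  have hFmeas : Measurable (Function.uncurry fun τ s => W (τ + s) * ENNReal.ofReal (‖η' s‖ ^ 2)) := by
    have : (Function.uncurry fun τ s => W (τ + s) * ENNReal.ofReal (‖η' s‖ ^ 2))
        = fun p : ℝ × ℝ => W (p.1 + p.2) * ENNReal.ofReal (‖η' p.2‖ ^ 2) := rfl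
    rw [this]
    exact (hWmeas.comp measurable_add).mul
      (((hη'sm.norm.measurable.pow_const 2).comp measurable_snd).ennreal_ofReal)
  have hBmeas : Measurable B := Measurable.lintegral_prod_right hFmeas
  have hηnn2 : 0 ≤ᵐ[volume.restrict Ω] fun s => μ s * ‖η s‖ ^ 2 := by
    refine (ae_restrict_iff' hΩmeas).2 (ae_of_all _ fun s hs => ?_)
    exact mul_nonneg (hμnn s (hΩsub hs)) (by positivity)
  have hBle : ∫⁻ τ in Ω, B τ ≤ ENNReal.ofReal (∫ s in Ω, μ s * ‖η s‖ ^ 2) := by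
    have hswap : ∫⁻ τ in Ω, B τ
        = ∫⁻ s in Ω, ∫⁻ τ in Ω, W (τ + s) * ENNReal.ofReal (‖η' s‖ ^ 2) :=
      lintegral_lintegral_swap hFmeas.aemeasurable
    rw [hswap]
    have hstep : ∀ s ∈ Ω, (∫⁻ τ in Ω, W (τ + s) * ENNReal.ofReal (‖η' s‖ ^ 2))
        ≤ ENNReal.ofReal (μ s) * ENNReal.ofReal (‖η' s‖ ^ 2) := by
      intro s hs
      rw [lintegral_mul_const _ (show Measurable fun τ => W (τ + s) from
        hWmeas.comp (measurable_add_const s))]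
      refine mul_le_mul_left ?_ _
      calc ∫⁻ τ in Ω, W (τ + s) = ∫⁻ τ in Ω, W (s + τ) := by simp_rw [add_comm]
        _ ≤ _ := hKey s (hΩsub hs)
    calc ∫⁻ s in Ω, ∫⁻ τ in Ω, W (τ + s) * ENNReal.ofReal (‖η' s‖ ^ 2)
        ≤ ∫⁻ s in Ω, ENNReal.ofReal (μ s) * ENNReal.ofReal (‖η' s‖ ^ 2) :=
          lintegral_mono_ae ((ae_restrict_iff' hΩmeas).2 (ae_of_all _ hstep))
      _ = ∫⁻ s in Ω, ENNReal.ofReal (μ s * ‖η s‖ ^ 2) := by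
          apply lintegral_congr_ae
          filter_upwards [hηae, ae_restrict_mem hΩmeas] with s h1 h2
          rw [← ENNReal.ofReal_mul (hμnn s (hΩsub h2)), h1]
      _ = ENNReal.ofReal (∫ s in Ω, μ s * ‖η s‖ ^ 2) :=
          (ofReal_integral_eq_lintegral_ofReal hηL2 hηnn2).symm
  have hBae : ∀ᵐ τ ∂(volume.restrict Ω), B τ < ⊤ :=
    ae_lt_top hBmeas (lt_of_le_of_lt hBle ENNReal.ofReal_lt_top).ne
  -- rpow identities
  have hFG : ∀ x : ℝ≥0∞, x ^ (1/2:ℝ) * x ^ (1/2:ℝ) = x := by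
    intro x
    rw [← ENNReal.rpow_add_of_nonneg _ _ (by norm_num) (by norm_num)]
    norm_num
  have hsq : ∀ x : ℝ≥0∞, (x ^ (1/2:ℝ)) ^ (2:ℝ) = x := by
    intro x
    rw [← ENNReal.rpow_mul]
    norm_num
  -- Cauchy-Schwarz
  have hCS : ∀ τ : ℝ, (∫⁻ s in Ω, W (τ + s) * ENNReal.ofReal ‖η' s‖)
      ≤ (∫⁻ s in Ω, W (τ + s)) ^ (1/2 : ℝ) * (B τ) ^ (1/2 : ℝ) := by
    intro τ
    have hconj : (2:ℝ).HolderConjugate 2 := Real.HolderConjugate.two_two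
    have hWτ : Measurable fun s => W (τ + s) := hWmeas.comp (measurable_const_add τ)
    have hF : AEMeasurable (fun s => (W (τ + s)) ^ (1/2:ℝ)) (volume.restrict Ω) :=
      (hWτ.pow_const _).aemeasurable
    have hG : AEMeasurable (fun s => (W (τ + s)) ^ (1/2:ℝ) * ENNReal.ofReal ‖η' s‖)
        (volume.restrict Ω) :=
      hF.mul (hη'sm.norm.measurable.ennreal_ofReal).aemeasurable
    calc ∫⁻ s in Ω, W (τ + s) * ENNReal.ofReal ‖η' s‖
        = ∫⁻ s in Ω, ((fun s => (W (τ + s)) ^ (1/2:ℝ)) *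
            (fun s => (W (τ + s)) ^ (1/2:ℝ) * ENNReal.ofReal ‖η' s‖)) s := by
          apply lintegral_congr; intro s
          simp only [Pi.mul_apply]
          rw [← mul_assoc, hFG]
      _ ≤ (∫⁻ s in Ω, ((W (τ + s)) ^ (1/2:ℝ)) ^ (2:ℝ)) ^ (1/(2:ℝ)) *
            (∫⁻ s in Ω, ((W (τ + s)) ^ (1/2:ℝ) * ENNReal.ofReal ‖η' s‖) ^ (2:ℝ)) ^ (1/(2:ℝ)) :=
          ENNReal.lintegral_mul_le_Lp_mul_Lq _ hconj hF hG
      _ = (∫⁻ s in Ω, W (τ + s)) ^ (1/2:ℝ) * (B τ) ^ (1/2:ℝ) := by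
          congr 1
          · congr 1
            apply lintegral_congr; intro s; exact hsq _
          · congr 1
            apply lintegral_congr; intro s
            rw [ENNReal.mul_rpow_of_nonneg _ _ (by norm_num), hsq,
              ENNReal.ofReal_rpow_of_nonneg (norm_nonneg _) (by norm_num),
              show (2:ℝ) = ((2:ℕ):ℝ) by norm_num, Real.rpow_natCast]
  -- lintegral of the norm
  have hnormEq : ∀ τ ∈ Ω, (∫⁻ s in Ω, ‖μ' (τ + s) • η s‖₊)
      = ∫⁻ s in Ω, W (τ + s) * ENNReal.ofReal ‖η' s‖ := by
    intro τ hτ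
    apply lintegral_congr_ae
    filter_upwards [hae_s τ (hΩsub hτ), hηae] with s hs hη
    rw [← enorm_eq_nnnorm, ← ofReal_norm, norm_smul, Real.norm_eq_abs, hs.1, abs_of_nonpos hs.2, hη,
      ENNReal.ofReal_mul (neg_nonneg.2 hs.2)]
  -- pointwise bound on the norm of the integral
  have hIbound : ∀ τ ∈ Ω, ((‖∫ s in Ω, μ' (τ + s) • η s‖₊ : ℝ≥0∞))
      ≤ ENNReal.ofReal (μ τ) ^ (1/2:ℝ) * B τ ^ (1/2:ℝ) := by
    intro τ hτ
    calc ((‖∫ s in Ω, μ' (τ + s) • η s‖₊ : ℝ≥0∞))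
        ≤ ∫⁻ s in Ω, ‖μ' (τ + s) • η s‖₊ := enorm_integral_le_lintegral_enorm _
      _ = ∫⁻ s in Ω, W (τ + s) * ENNReal.ofReal ‖η' s‖ := hnormEq τ hτ
      _ ≤ (∫⁻ s in Ω, W (τ + s)) ^ (1/2:ℝ) * B τ ^ (1/2:ℝ) := hCS τ
      _ ≤ ENNReal.ofReal (μ τ) ^ (1/2:ℝ) * B τ ^ (1/2:ℝ) := by
          gcongr
          exact hKey τ (hΩsub hτ)
  -- pointwise bound of the quotient by B
  have hptwise : ∀ τ ∈ Ω,
      ENNReal.ofReal ((μ τ)⁻¹ * ‖∫ s in Ω, μ' (τ + s) • η s‖ ^ 2) ≤ B τ := by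
    intro τ hτ
    have hμτ : 0 < μ τ := hμpos τ hτ
    have h1 : ENNReal.ofReal (‖∫ s in Ω, μ' (τ + s) • η s‖ ^ 2)
        = ((‖∫ s in Ω, μ' (τ + s) • η s‖₊ : ℝ≥0∞)) ^ 2 := by
      rw [ENNReal.ofReal_pow (norm_nonneg _), ofReal_norm]; rfl
    calc ENNReal.ofReal ((μ τ)⁻¹ * ‖∫ s in Ω, μ' (τ + s) • η s‖ ^ 2)
        = ENNReal.ofReal ((μ τ)⁻¹) * ENNReal.ofReal (‖∫ s in Ω, μ' (τ + s) • η s‖ ^ 2) :=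
          ENNReal.ofReal_mul (inv_nonneg.2 hμτ.le)
      _ ≤ ENNReal.ofReal ((μ τ)⁻¹) * (ENNReal.ofReal (μ τ) ^ (1/2:ℝ) * B τ ^ (1/2:ℝ)) ^ 2 := by
          rw [h1]
          gcongr
          exact hIbound τ hτ
      _ = ENNReal.ofReal ((μ τ)⁻¹) * (ENNReal.ofReal (μ τ) * B τ) := by
          congr 1
          rw [mul_pow, ← ENNReal.rpow_natCast (ENNReal.ofReal (μ τ) ^ (1/2:ℝ)) 2,
            ← ENNReal.rpow_natCast (B τ ^ (1/2:ℝ)) 2, ← ENNReal.rpow_mul, ← ENNReal.rpow_mul]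
          norm_num
      _ = (ENNReal.ofReal ((μ τ)⁻¹) * ENNReal.ofReal (μ τ)) * B τ := (mul_assoc _ _ _).symm
      _ = B τ := by
          rw [← ENNReal.ofReal_mul (inv_nonneg.2 hμτ.le), inv_mul_cancel₀ hμτ.ne',
            ENNReal.ofReal_one, one_mul]
  -- conclusion 1: a.e. integrability
  have hInt1 : ∀ᵐ τ ∂(volume.restrict Ω), IntegrableOn (fun s => μ' (τ + s) • η s) Ω := by
    filter_upwards [hBae, ae_restrict_mem hΩmeas] with τ hBτ hτ
    refine ⟨?_, ?_⟩
    · have hsm : StronglyMeasurable fun s => g (τ + s) • η' s :=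
        ((hgmeas.comp (measurable_const_add τ)).stronglyMeasurable).smul hη'sm
      refine hsm.aestronglyMeasurable.congr ?_
      filter_upwards [hae_s τ (hΩsub hτ), hηae] with s hs hη
      rw [← hs.1, ← hη]
    · simp only [HasFiniteIntegral, enorm_eq_nnnorm]
      rw [hnormEq τ hτ]
      have hb : (∫⁻ s in Ω, W (τ + s) * ENNReal.ofReal ‖η' s‖)
          ≤ ENNReal.ofReal (μ τ) ^ (1/2:ℝ) * B τ ^ (1/2:ℝ) := by
        refine (hCS τ).trans ?_
        gcongr
        exact hKey τ (hΩsub hτ)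
      exact lt_of_le_of_lt hb
        (ENNReal.mul_lt_top
          (ENNReal.rpow_lt_top_of_nonneg (by norm_num) ENNReal.ofReal_ne_top)
          (ENNReal.rpow_lt_top_of_nonneg (by norm_num) hBτ.ne))
  -- the integral defining Πη agrees a.e. with a measurable version
  have hIτeq : ∀ᵐ τ ∂(volume.restrict Ω),
      (∫ s in Ω, μ' (τ + s) • η s) = ∫ s in Ω, g (τ + s) • η' s := by
    filter_upwards [ae_restrict_mem hΩmeas] with τ hτ
    apply integral_congr_ae
    filter_upwards [hae_s τ (hΩsub hτ), hηae] with s hs hη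
    rw [hs.1, hη]
  have hIsm : AEStronglyMeasurable (fun τ => ∫ s in Ω, μ' (τ + s) • η s)
      (volume.restrict Ω) := by
    have hunc : StronglyMeasurable (Function.uncurry fun τ s => g (τ + s) • η' s) := by
      have : (Function.uncurry fun τ s => g (τ + s) • η' s)
          = fun p : ℝ × ℝ => g (p.1 + p.2) • η' p.2 := rfl
      rw [this]
      exact ((hgmeas.comp measurable_add).stronglyMeasurable).smul
        (hη'sm.comp_measurable measurable_snd)
    have hsm : StronglyMeasurable (fun τ => ∫ s in Ω, g (τ + s) • η' s) :=
      hunc.integral_prod_right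
    exact hsm.aestronglyMeasurable.congr (hIτeq.mono fun τ h => h.symm)
  -- total bound on the lintegral
  have hfin : (∫⁻ τ in Ω, ENNReal.ofReal ((μ τ)⁻¹ * ‖∫ s in Ω, μ' (τ + s) • η s‖ ^ 2))
      ≤ ENNReal.ofReal (∫ s in Ω, μ s * ‖η s‖ ^ 2) :=
    le_trans (lintegral_mono_ae ((ae_restrict_iff' hΩmeas).2 (ae_of_all _ hptwise))) hBle
  have hf2meas : AEStronglyMeasurable (fun τ => (μ τ)⁻¹ * ‖∫ s in Ω, μ' (τ + s) • η s‖ ^ 2)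
      (volume.restrict Ω) := by
    have hμinv : AEMeasurable (fun τ => (μ τ)⁻¹) (volume.restrict Ω) :=
      ((hμint.aestronglyMeasurable.mono_measure
        (Measure.restrict_mono hΩsub le_rfl)).aemeasurable).inv
    exact (hμinv.mul ((hIsm.norm.aemeasurable).pow_const 2)).aestronglyMeasurable
  have hf2nn : 0 ≤ᵐ[volume.restrict Ω]
      fun τ => (μ τ)⁻¹ * ‖∫ s in Ω, μ' (τ + s) • η s‖ ^ 2 := by
    refine (ae_restrict_iff' hΩmeas).2 (ae_of_all _ fun τ hτ => ?_)
    exact mul_nonneg (inv_nonneg.2 (hμpos τ hτ).le) (by positivity)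
  have hInt2 : IntegrableOn (fun τ => (μ τ)⁻¹ * ‖∫ s in Ω, μ' (τ + s) • η s‖ ^ 2) Ω := by
    refine ⟨hf2meas, ?_⟩
    rw [hasFiniteIntegral_iff_ofReal hf2nn]
    exact lt_of_le_of_lt hfin ENNReal.ofReal_lt_top
  refine ⟨hInt1, hInt2, ?_⟩
  have hRHSnn : 0 ≤ ∫ s in Ω, μ s * ‖η s‖ ^ 2 := integral_nonneg_of_ae hηnn2
  rw [integral_eq_lintegral_of_nonneg_ae hf2nn hf2meas]
  exact ENNReal.toReal_le_of_le_ofReal hRHSnn hfin
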